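/- Suppose for each data point (x,y) the truncated Hessian quadratic form satisfies W^T [∇²ℓ(f_W(x),y)]⁺ W ≤ H for all W in the hypothesis class, where H > 0 is a constant. Then with Σ chosen as in equation (choice Σ ∝ (H_W)^{-1/2} W W^T with scaling sqrt(C/(2(1−β)² n ‖W‖²))), the two terms C·W^TΣ^{-1}W/(4β(1−β)n) and ((1−β)/(2β))⟨Σ, H_W⟩ are each bounded above by (1/β)·sqrt(C·H/(2n)). -/

import Mathlib

open Matrix
open scoped Matrix

private lemma dot_sq_le {p : ℕ} (a b : Fin p → ℝ) :
    (a ⬝ᵥ b) ^ 2 ≤ (a ⬝ᵥ a) * (b ⬝ᵥ b) := by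
  simpa only [dotProduct, pow_two] using Finset.sum_mul_sq_le_sq_mul_sq Finset.univ a b

private lemma mul_vecMulVec' {p : ℕ} (A : Matrix (Fin p) (Fin p) ℝ) (a b : Fin p → ℝ) :
    A * vecMulVec a b = vecMulVec (A *ᵥ a) b := by
  ext i j
  simp only [Matrix.mul_apply, vecMulVec_apply, Matrix.mulVec, dotProduct]
  rw [Finset.sum_mul]
  exact Finset.sum_congr rfl fun k _ => by ring

private lemma vecMulVec_mul' {p : ℕ} (a b : Fin p → ℝ) (A : Matrix (Fin p) (Fin p) ℝ) :
    vecMulVec a b * A = vecMulVec a (b ᵥ* A) := by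
  ext i j
  simp [vecMulVec_apply, Matrix.mul_apply, Matrix.vecMul, dotProduct, Finset.mul_sum, mul_assoc]

private lemma vecMul_vecMulVec' {p : ℕ} (x a b : Fin p → ℝ) :
    x ᵥ* vecMulVec a b = (x ⬝ᵥ a) • b := by
  ext j
  simp [vecMulVec_apply, Matrix.vecMul, dotProduct, Finset.sum_mul, mul_assoc]

private lemma vecMulVec_smul' {p : ℕ} (a : Fin p → ℝ) (t : ℝ) (b : Fin p → ℝ) :
    vecMulVec a (t • b) = t • vecMulVec a b := by
  ext i j
  simp [vecMulVec_apply, mul_comm, mul_left_comm]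

private lemma vecMulVec_transpose' {p : ℕ} (a b : Fin p → ℝ) :
    (vecMulVec a b)ᵀ = vecMulVec b a := by
  ext i j
  simp [vecMulVec_apply, mul_comm]

private lemma trace_vecMulVec' {p : ℕ} (a b : Fin p → ℝ) :
    (vecMulVec a b).trace = a ⬝ᵥ b := by
  simp [Matrix.trace, Matrix.diag, vecMulVec_apply, dotProduct]

private lemma le_of_sq_le_sq' {x y : ℝ} (hx : 0 ≤ x) (hy : 0 ≤ y) (h : x ^ 2 ≤ y ^ 2) :
    x ≤ y := by nlinarith

private lemma scalar1 (H C β nreal s nw a : ℝ) (hH : 0 < H) (hC : 0 < C) (hβ0 : 0 < β)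
    (hβ1 : β < 1) (hn' : 0 < nreal) (hs : 0 < s) (hnw : 0 < nw)
    (hCS1 : a ^ 2 ≤ s * nw) (hnw2 : nw ^ 2 ≤ H * s) :
    C ^ 2 * (a ^ 2 / (C / (2 * (1 - β) ^ 2 * nreal * nw) * s ^ 2)) /
        (4 * β * (1 - β) * nreal) ^ 2 ≤ 1 / β ^ 2 * (C * H / (2 * nreal)) := by
  have h1β : 0 < 1 - β := by linarith
  have hβne : β ≠ 0 := hβ0.ne'
  have h1βne : (1:ℝ) - β ≠ 0 := h1β.ne'
  have hnne : nreal ≠ 0 := hn'.ne'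
  have hnwne : nw ≠ 0 := hnw.ne'
  have hsne : s ≠ 0 := hs.ne'
  have h1 : a ^ 2 * nw ≤ s * nw ^ 2 := by nlinarith
  have h2 : s * nw ^ 2 ≤ H * s ^ 2 := by nlinarith
  have h3 : a ^ 2 * nw ≤ H * s ^ 2 := le_trans h1 h2
  have hK : (0:ℝ) < C ^ 2 * (1 - β) ^ 2 * β ^ 2 * nreal ^ 2 := by positivity
  have h4 : (0:ℝ) ≤ (C ^ 2 * (1 - β) ^ 2 * β ^ 2 * nreal ^ 2) * (H * s ^ 2) := by positivity
  have h5 := mul_le_mul_of_nonneg_left h3 hK.le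
  field_simp
  nlinarith [h4, h5, h3, mul_pos hH (pow_pos hs 2)]

private lemma scalar2 (H C β nreal nw q : ℝ) (hH : 0 < H) (hC : 0 < C) (hβ0 : 0 < β)
    (hβ1 : β < 1) (hn' : 0 < nreal) (hnw : 0 < nw) (hq2 : q ^ 2 ≤ nw * H) :
    (1 - β) ^ 2 / (2 * β) ^ 2 * (C / (2 * (1 - β) ^ 2 * nreal * nw) * q ^ 2) ≤
      1 / β ^ 2 * (C * H / (2 * nreal)) := by
  have h1β : 0 < 1 - β := by linarith
  have hβne : β ≠ 0 := hβ0.ne'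
  have h1βne : (1:ℝ) - β ≠ 0 := h1β.ne'
  have hnne : nreal ≠ 0 := hn'.ne'
  have hnwne : nw ≠ 0 := hnw.ne'
  have hK : (0:ℝ) < C * (1 - β) ^ 2 * β ^ 2 * nreal := by positivity
  have h4 : (0:ℝ) ≤ (C * (1 - β) ^ 2 * β ^ 2 * nreal) * (nw * H) := by positivity
  have h5 := mul_le_mul_of_nonneg_left hq2 hK.le
  field_simp
  nlinarith [h4, h5, hq2, mul_pos hnw hH]

/-- Let `H_W` be the expected truncated Hessian (symmetric positive
definite), with PSD square root `R = H_W^{1/2}` and inverse square root `Rinv = H_W^{-1/2}`.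
Suppose the truncated Hessian quadratic form satisfies `Wᵀ H_W W ≤ H` for a constant
`H > 0`. Choose `Σ = c · H_W^{-1/2} W Wᵀ` with scaling `c = sqrt(C/(2(1−β)² n ‖W‖²))`,
and let `Sinv` be a Moore–Penrose pseudo-inverse of `Σ`. Then the two terms
`C · Wᵀ Σ⁻¹ W / (4β(1−β)n)` and `((1−β)/(2β)) ⟨Σ, H_W⟩` are each bounded above by
`(1/β) · sqrt(C·H/(2n))`. -/
theorem stmt19_balanced_terms_bound
    (pdim : ℕ) (HW R Rinv : Matrix (Fin pdim) (Fin pdim) ℝ) (W : Fin pdim → ℝ)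
    (hHW : HW.PosDef) (hR : R.PosSemidef) (hRR : R * R = HW)
    (hRinv : R * Rinv = 1) (hRinvSymm : Rinv.IsSymm)
    (hW : W ≠ 0) (H C β : ℝ) (hH : 0 < H) (hC : 0 < C)
    (hβ : β ∈ Set.Ioo (0 : ℝ) 1) (n : ℕ) (hn : 1 ≤ n)
    (hquad : W ⬝ᵥ (HW *ᵥ W) ≤ H)
    (Sinv : Matrix (Fin pdim) (Fin pdim) ℝ)
    (c : ℝ) (hc : c = Real.sqrt (C / (2 * (1 - β) ^ 2 * n * (W ⬝ᵥ W))))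
    (Sig : Matrix (Fin pdim) (Fin pdim) ℝ)
    (hSig : Sig = c • (Rinv * vecMulVec W W))
    (hpinv1 : Sig * Sinv * Sig = Sig) (hpinv2 : Sinv * Sig * Sinv = Sinv)
    (hpinv3 : (Sig * Sinv)ᵀ = Sig * Sinv) (hpinv4 : (Sinv * Sig)ᵀ = Sinv * Sig) :
    C * (W ⬝ᵥ (Sinv *ᵥ W)) / (4 * β * (1 - β) * n) ≤
        (1 / β) * Real.sqrt (C * H / (2 * n)) ∧
      ((1 - β) / (2 * β)) * (Sigᵀ * HW).trace ≤
        (1 / β) * Real.sqrt (C * H / (2 * n)) := by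
  obtain ⟨hβ0, hβ1⟩ := hβ
  have h1β : 0 < 1 - β := by linarith
  have hn' : (0 : ℝ) < n := by exact_mod_cast hn
  have hRsymm : Rᵀ = R := (by simpa using hR.1 : R.IsSymm).eq
  have hHWsymm : HWᵀ = HW := (by simpa using hHW.1 : HW.IsSymm).eq
  -- the vector u = Rinv W
  obtain ⟨u, hu⟩ : ∃ u : Fin pdim → ℝ, u = Rinv *ᵥ W := ⟨_, rfl⟩
  have hRu : R *ᵥ u = W := by
    rw [hu, Matrix.mulVec_mulVec, hRinv, Matrix.one_mulVec]
  have hu0 : u ≠ 0 := fun h => hW (by rw [← hRu, h, Matrix.mulVec_zero])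
  -- positivity of key scalars
  have hnw0 : (0 : ℝ) ≤ W ⬝ᵥ W := by
    simpa [dotProduct] using Finset.sum_nonneg fun i _ => mul_self_nonneg (W i)
  have hnw : (0 : ℝ) < W ⬝ᵥ W :=
    lt_of_le_of_ne hnw0 fun h => hW (dotProduct_self_eq_zero.1 h.symm)
  have hs0 : (0 : ℝ) ≤ u ⬝ᵥ u := by
    simpa [dotProduct] using Finset.sum_nonneg fun i _ => mul_self_nonneg (u i)
  have hs : (0 : ℝ) < u ⬝ᵥ u :=
    lt_of_le_of_ne hs0 fun h => hu0 (dotProduct_self_eq_zero.1 h.symm)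
  have hc0 : 0 < c := by
    rw [hc]; exact Real.sqrt_pos.2 (by positivity)
  have hc2 : c ^ 2 = C / (2 * (1 - β) ^ 2 * n * (W ⬝ᵥ W)) := by
    rw [hc, Real.sq_sqrt (by positivity)]
  -- Sig as a rank-one matrix
  have hSig' : Sig = c • vecMulVec u W := by
    rw [hSig, mul_vecMulVec', ← hu]
  -- the row vector v = W Sinv
  obtain ⟨v, hv⟩ : ∃ v : Fin pdim → ℝ, v = W ᵥ* Sinv := ⟨_, rfl⟩
  have hSS : Sig * Sinv = c • vecMulVec u v := by
    rw [hSig', Matrix.smul_mul, vecMulVec_mul', ← hv]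
  -- from the first Penrose identity : c * (v ⬝ᵥ u) = 1
  have hpen1 : c * (v ⬝ᵥ u) = 1 := by
    have h1 : (c * (v ⬝ᵥ u) * c) • vecMulVec u W = c • vecMulVec u W := by
      calc (c * (v ⬝ᵥ u) * c) • vecMulVec u W
          = Sig * Sinv * Sig := by
            rw [hSS, hSig', Matrix.smul_mul, Matrix.mul_smul, vecMulVec_mul',
              vecMul_vecMulVec', _root_.vecMulVec_smul', smul_smul, smul_smul]
            ring_nf
        _ = Sig := hpinv1
        _ = c • vecMulVec u W := hSig'
    obtain ⟨i, hi⟩ := Function.ne_iff.1 hu0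
    obtain ⟨j, hj⟩ := Function.ne_iff.1 hW
    have h2 := congrFun (congrFun h1 i) j
    simp only [Matrix.smul_apply, vecMulVec_apply, smul_eq_mul] at h2
    have h3 : c * (v ⬝ᵥ u) * c = c := by
      have huw : u i * W j ≠ 0 := mul_ne_zero (by simpa using hi) (by simpa using hj)
      exact mul_right_cancel₀ huw h2
    have h4 : (c * (v ⬝ᵥ u)) * c = 1 * c := by rw [one_mul]; exact h3
    exact mul_right_cancel₀ (ne_of_gt hc0) h4
  -- from the symmetry Penrose identity : v i * u j = u i * v j
  have hsym : ∀ i j, v i * u j = u i * v j := by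
    have h1 : c • vecMulVec v u = c • vecMulVec u v := by
      calc c • vecMulVec v u = (c • vecMulVec u v)ᵀ := by
            rw [Matrix.transpose_smul, vecMulVec_transpose']
        _ = (Sig * Sinv)ᵀ := by rw [hSS]
        _ = Sig * Sinv := hpinv3
        _ = c • vecMulVec u v := hSS
    intro i j
    have h2 := congrFun (congrFun h1 i) j
    simp only [Matrix.smul_apply, vecMulVec_apply, smul_eq_mul] at h2
    exact mul_left_cancel₀ (ne_of_gt hc0) h2
  -- hence v is proportional to u
  have hvprop : ∀ j, (u ⬝ᵥ u) * v j = (u ⬝ᵥ v) * u j := by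
    intro j
    simp only [dotProduct, Finset.sum_mul]
    refine Finset.sum_congr rfl fun i _ => ?_
    have := hsym i j
    calc u i * u i * v j = u i * (u i * v j) := by ring
      _ = u i * (v i * u j) := by rw [← this]
      _ = u i * v i * u j := by ring
  -- the key value of the quadratic form in Sinv
  have hfun : (u ⬝ᵥ u) • v = (u ⬝ᵥ v) • u := funext fun j => by simpa using hvprop j
  have hkey : (u ⬝ᵥ u) * (W ⬝ᵥ (Sinv *ᵥ W)) = (u ⬝ᵥ v) * (u ⬝ᵥ W) := by
    rw [Matrix.dotProduct_mulVec, ← hv, ← smul_eq_mul, ← smul_dotProduct, hfun,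
      smul_dotProduct, smul_eq_mul]
  have huv : u ⬝ᵥ v = 1 / c := by
    rw [dotProduct_comm]
    field_simp
    linarith [hpen1]
  have ht : W ⬝ᵥ (Sinv *ᵥ W) = (u ⬝ᵥ W) / (c * (u ⬝ᵥ u)) := by
    rw [eq_div_iff (by positivity)]
    calc W ⬝ᵥ (Sinv *ᵥ W) * (c * (u ⬝ᵥ u))
        = c * ((u ⬝ᵥ u) * (W ⬝ᵥ (Sinv *ᵥ W))) := by ring
      _ = c * ((u ⬝ᵥ v) * (u ⬝ᵥ W)) := by rw [hkey]
      _ = (c * (u ⬝ᵥ v)) * (u ⬝ᵥ W) := by ring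
      _ = u ⬝ᵥ W := by rw [huv]; field_simp
  -- Cauchy-Schwarz facts
  have hRWRW : (R *ᵥ W) ⬝ᵥ (R *ᵥ W) = W ⬝ᵥ (HW *ᵥ W) := by
    rw [Matrix.dotProduct_mulVec, ← Matrix.mulVec_transpose, hRsymm, Matrix.mulVec_mulVec, hRR,
      dotProduct_comm]
  have hnwRu : W ⬝ᵥ W = (R *ᵥ W) ⬝ᵥ u := by
    conv_lhs => rw [← hRu]
    rw [Matrix.dotProduct_mulVec, ← Matrix.mulVec_transpose, hRsymm, hRu]
  have hCS1 : (u ⬝ᵥ W) ^ 2 ≤ (u ⬝ᵥ u) * (W ⬝ᵥ W) := dot_sq_le u W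
  have hnw2 : (W ⬝ᵥ W) ^ 2 ≤ H * (u ⬝ᵥ u) := by
    calc (W ⬝ᵥ W) ^ 2 = ((R *ᵥ W) ⬝ᵥ u) ^ 2 := by rw [hnwRu]
      _ ≤ ((R *ᵥ W) ⬝ᵥ (R *ᵥ W)) * (u ⬝ᵥ u) := dot_sq_le _ _
      _ = (W ⬝ᵥ (HW *ᵥ W)) * (u ⬝ᵥ u) := by rw [hRWRW]
      _ ≤ H * (u ⬝ᵥ u) := by nlinarith
  have hq0 : 0 ≤ W ⬝ᵥ (R *ᵥ W) := by simpa using hR.dotProduct_mulVec_nonneg W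
  have hq2 : (W ⬝ᵥ (R *ᵥ W)) ^ 2 ≤ (W ⬝ᵥ W) * H := by
    calc (W ⬝ᵥ (R *ᵥ W)) ^ 2 ≤ (W ⬝ᵥ W) * ((R *ᵥ W) ⬝ᵥ (R *ᵥ W)) := dot_sq_le _ _
      _ = (W ⬝ᵥ W) * (W ⬝ᵥ (HW *ᵥ W)) := by rw [hRWRW]
      _ ≤ (W ⬝ᵥ W) * H := by nlinarith
  -- trace computation
  have htr : (Sigᵀ * HW).trace = c * (W ⬝ᵥ (R *ᵥ W)) := by
    have hHWu : u ᵥ* HW = R *ᵥ W := by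
      rw [← Matrix.mulVec_transpose, hHWsymm, ← hRR, ← Matrix.mulVec_mulVec, hRu]
    rw [hSig', Matrix.transpose_smul, vecMulVec_transpose', Matrix.smul_mul, vecMulVec_mul',
      hHWu, Matrix.trace_smul, trace_vecMulVec', smul_eq_mul]
  have hRHS0 : 0 ≤ (1 / β) * Real.sqrt (C * H / (2 * n)) := by positivity
  have hRHSsq : ((1 / β) * Real.sqrt (C * H / (2 * n))) ^ 2 = (1 / β ^ 2) * (C * H / (2 * n)) := by
    rw [mul_pow, Real.sq_sqrt (by positivity)]
    ring
  constructor
  · -- first term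
    rw [ht]
    rcases le_or_gt (u ⬝ᵥ W) 0 with ha | ha
    · have : C * ((u ⬝ᵥ W) / (c * (u ⬝ᵥ u))) / (4 * β * (1 - β) * n) ≤ 0 := by
        apply div_nonpos_of_nonpos_of_nonneg
        · exact mul_nonpos_of_nonneg_of_nonpos hC.le (div_nonpos_of_nonpos_of_nonneg ha (by positivity))
        · positivity
      linarith [hRHS0]
    · have hLHS0 : 0 ≤ C * ((u ⬝ᵥ W) / (c * (u ⬝ᵥ u))) / (4 * β * (1 - β) * ↑n) :=
        div_nonneg (mul_nonneg hC.le (div_nonneg ha.le (by positivity))) (by positivity)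
      apply le_of_sq_le_sq' hLHS0 hRHS0
      rw [hRHSsq, div_pow, mul_pow, div_pow, mul_pow, hc2]
      exact scalar1 H C β n (u ⬝ᵥ u) (W ⬝ᵥ W) (u ⬝ᵥ W) hH hC hβ0 hβ1 hn' hs hnw hCS1 hnw2
  · -- second term
    rw [htr]
    have hLHS0 : 0 ≤ (1 - β) / (2 * β) * (c * (W ⬝ᵥ R *ᵥ W)) :=
      mul_nonneg (by positivity) (mul_nonneg hc0.le hq0)
    apply le_of_sq_le_sq' hLHS0 hRHS0
    rw [hRHSsq, mul_pow, mul_pow, div_pow, hc2]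
    exact scalar2 H C β n (W ⬝ᵥ W) (W ⬝ᵥ (R *ᵥ W)) hH hC hβ0 hβ1 hn' hnw hq2
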